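/- Let S be a subring of a ring R and a ∈ S with aⁿ = aⁿ⁺¹x for some positive integer n and x ∈ S. If a is strongly π-regular in R, then there exists y ∈ S with aⁿ = yaⁿ⁺¹; in particular a is strongly π-regular in S. -/
import Mathlib


/-- If `S` is a (not necessarily unital) subring of `R`, `a ∈ S` with
`a^n = a^(n+1) * x` for some `x ∈ S`, and `a` is strongly π-regular in `R`,
then there exists `y ∈ S` with `a^n = y * a^(n+1)`. -/
theorem stmt_1 {R : Type*} [Ring R] (S : NonUnitalSubring R) (a x : R)
    (ha : a ∈ S) (hx : x ∈ S) (n : ℕ) (hn : 0 < n)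
    (h : a ^ n = a ^ (n + 1) * x)
    (hleft : ∃ (m : ℕ) (y : R), 0 < m ∧ a ^ m = y * a ^ (m + 1)) :
    ∃ y ∈ S, a ^ n = y * a ^ (n + 1) := by
  obtain ⟨m, y, hm, hy⟩ := hleft
  set N := max n m with hNdef
  have hNn : n ≤ N := le_max_left _ _
  have hNm : m ≤ N := le_max_right _ _
  -- powers of a stay in S
  have hpow : ∀ k : ℕ, 0 < k → a ^ k ∈ S := by
    intro k hk
    induction k with
    | zero => omega
    | succ k ih =>
      rcases Nat.eq_zero_or_pos k with rfl | hk'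
      · simpa using ha
      · rw [pow_succ]
        exact S.mul_mem (ih hk') ha
  have hxpow : ∀ k : ℕ, 0 < k → x ^ k ∈ S := by
    intro k hk
    induction k with
    | zero => omega
    | succ k ih =>
      rcases Nat.eq_zero_or_pos k with rfl | hk'
      · simpa using hx
      · rw [pow_succ]
        exact S.mul_mem (ih hk') hx
  -- f1 : a^(n+k) * x^k = a^n
  have f1 : ∀ k : ℕ, a ^ (n + k) * x ^ k = a ^ n := by
    intro k
    induction k with
    | zero => simp
    | succ k ih =>
      have e1 : a ^ (n + (k + 1)) = a ^ k * a ^ (n + 1) := by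
        rw [← pow_add]; congr 1; omega
      rw [e1, pow_succ' x k, ← mul_assoc, mul_assoc (a ^ k), ← h, ← pow_add,
        Nat.add_comm k n, ih]
  -- hN1 : a^(t+1) * x = a^t for t ≥ n
  have hN1 : ∀ t : ℕ, n ≤ t → a ^ (t + 1) * x = a ^ t := by
    intro t ht
    obtain ⟨j, rfl⟩ := Nat.exists_eq_add_of_le ht
    have e1 : a ^ (n + j + 1) = a ^ j * a ^ (n + 1) := by
      rw [← pow_add]; congr 1; omega
    rw [e1, mul_assoc, ← h, ← pow_add, Nat.add_comm j n]
  -- f2 : a^t = y * a^(t+1) for t ≥ m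
  have f2 : ∀ t : ℕ, m ≤ t → a ^ t = y * a ^ (t + 1) := by
    intro t ht
    obtain ⟨j, rfl⟩ := Nat.exists_eq_add_of_le ht
    rw [show m + j + 1 = m + 1 + j by omega, pow_add, pow_add, hy, mul_assoc]
  -- f5 : y^k * a^(N+k) = a^N
  have f5 : ∀ k : ℕ, y ^ k * a ^ (N + k) = a ^ N := by
    intro k
    induction k with
    | zero => simp
    | succ k ih =>
      rw [pow_succ y k, mul_assoc, show N + (k + 1) = (N + k) + 1 by omega,
        ← f2 (N + k) (le_trans hNm (Nat.le_add_right _ _)), ih]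
  -- f3 : a^N * x = y * a^N
  have f3 : a ^ N * x = y * a ^ N := by
    rw [f2 N hNm, mul_assoc, hN1 (N) hNn]
    rw [← f2 N hNm]
  -- f4 : a^N * x^k = y^k * a^N
  have f4 : ∀ k : ℕ, a ^ N * x ^ k = y ^ k * a ^ N := by
    intro k
    induction k with
    | zero => simp
    | succ k ih =>
      rw [pow_succ x k, ← mul_assoc, ih, mul_assoc, f3, pow_succ y k, ← mul_assoc,
        mul_assoc]
  -- the witness
  refine ⟨a ^ N * x ^ (N + 1), S.mul_mem (hpow N (lt_of_lt_of_le hn hNn)) (hxpow (N + 1) (Nat.succ_pos N)), ?_⟩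
  have key : a ^ N * x ^ (N + 1) * a ^ (N + 1) = a ^ N := by
    rw [f4 (N + 1), mul_assoc, ← pow_add, f5 (N + 1)]
  have e2 : a ^ n = a ^ N * x ^ (N - n) := by
    rw [← f1 (N - n)]; congr 2; omega
  calc a ^ n = a ^ N * x ^ (N - n) := e2
    _ = (a ^ N * x ^ (N + 1) * a ^ (N + 1)) * x ^ (N - n) := by rw [key]
    _ = a ^ N * x ^ (N + 1) * (a * (a ^ N * x ^ (N - n))) := by
        rw [pow_succ' a N]; simp only [mul_assoc]
    _ = a ^ N * x ^ (N + 1) * (a * a ^ n) := by rw [← e2]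
    _ = a ^ N * x ^ (N + 1) * a ^ (n + 1) := by rw [← pow_succ' a n]
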